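/- Let G be a graph, A ⊆ V(G), and t a natural number. The number of equivalence classes of the n-neighbor equivalence relation (n = |V(G)|) restricted to subsets of A of size at most t is at most 2^{t·rw(A)}, where rw(A) is the rank over GF(2) of the bipartite adjacency matrix between A and V(G)\A. -/

import Mathlib

set_option maxHeartbeats 1000000 in
private lemma count_eq_sum {V : Type*} [Fintype V] [DecidableEq V] (G : SimpleGraph V)
    [DecidableRel G.Adj] (X : Finset V) (u : V) :
    (G.neighborFinset u ∩ X).card = ∑ a ∈ X, (if G.Adj a u then 1 else 0 : ℕ) := by
  rw [Finset.inter_comm, ← Finset.filter_mem_eq_inter, Finset.card_filter]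
  refine Finset.sum_congr rfl fun a _ => ?_
  simp [SimpleGraph.mem_neighborFinset, G.adj_comm]

/-- `X` and `Y` are `d`-neighbor equivalent over `A` in `G`. -/
def nequiv {V : Type*} [Fintype V] [DecidableEq V] (G : SimpleGraph V) [DecidableRel G.Adj]
    (d : ℕ) (A X Y : Finset V) : Prop :=
  ∀ u ∉ A, min d (G.neighborFinset u ∩ X).card = min d (G.neighborFinset u ∩ Y).card

/-- The `n`-neighbor equivalence relation (`n = |V(G)|`) on subsets of `A` of size ≤ t. -/
def necSetoidLe {V : Type*} [Fintype V] [DecidableEq V] (G : SimpleGraph V)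
    [DecidableRel G.Adj] (A : Finset V) (t : ℕ) :
    Setoid {X : Finset V // X ⊆ A ∧ X.card ≤ t} where
  r X Y := nequiv G (Fintype.card V) A X.1 Y.1
  iseqv := ⟨fun _ _ _ => rfl, fun h u hu => (h u hu).symm,
    fun h1 h2 u hu => (h1 u hu).trans (h2 u hu)⟩

/-- The bipartite adjacency matrix between `A` and its complement, over a ring `F`. -/
def bipAdj {V : Type*} [Fintype V] [DecidableEq V] (G : SimpleGraph V) [DecidableRel G.Adj]
    (A : Finset V) (F : Type*) [Zero F] [One F] :
    Matrix {x // x ∈ A} {y // y ∈ Aᶜ} F :=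
  Matrix.of fun a b => if G.Adj a.1 b.1 then 1 else 0

set_option maxHeartbeats 1000000 in
/-- The number of `n`-neighbor equivalence classes among subsets of `A` of size at most `t`
is at most `2^{t · rw(A)}`, where `rw(A)` is the rank over `GF(2)` of `M_{A,Ā}`. -/
theorem necLe_le_pow_rankGF2 {V : Type*} [Fintype V] [DecidableEq V]
    (G : SimpleGraph V) [DecidableRel G.Adj] (A : Finset V) (t : ℕ) :
    Nat.card (Quotient (necSetoidLe G A t)) ≤ 2 ^ (t * (bipAdj G A (ZMod 2)).rank) := by
  classical
  set M := bipAdj G A (ZMod 2) with hM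
  set W := Submodule.span (ZMod 2) (Set.range M) with hWdef
  have hmin : ∀ (X : Finset V) (u : V),
      min (Fintype.card V) (G.neighborFinset u ∩ X).card = (G.neighborFinset u ∩ X).card :=
    fun X u => min_eq_right (Finset.card_le_univ _)
  -- the map from tuples of row-space elements to classes
  let lift : W → {y // y ∈ Aᶜ} → ℕ := fun w u => (w.1 u).val
  let good : (Fin t → W) → {X : Finset V // X ⊆ A ∧ X.card ≤ t} → Prop :=
    fun c X => ∀ u : {y // y ∈ Aᶜ}, (G.neighborFinset u.1 ∩ X.1).card = ∑ i, lift (c i) u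
  let Φ : (Fin t → W) → Quotient (necSetoidLe G A t) := fun c =>
    if h : ∃ X, good c X then ⟦h.choose⟧ else ⟦⟨∅, by simp⟩⟧
  have hsurj : Function.Surjective Φ := by
    rintro ⟨⟨X, hXA, hXt⟩⟩
    set s := X.card with hs
    let e : Fin s ≃ {a // a ∈ X} := X.equivFin.symm
    let c : Fin t → W := fun i =>
      if h : (i : ℕ) < s then
        ⟨M ⟨(e ⟨i, h⟩ : V), hXA (e ⟨i, h⟩).2⟩, Submodule.subset_span ⟨_, rfl⟩⟩
      else 0
    have hgood : good c ⟨X, hXA, hXt⟩ := by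
      intro u
      rw [count_eq_sum]
      let g : ℕ → ℕ := fun i =>
        if h : i < s then (if G.Adj (e ⟨i, h⟩ : V) u.1 then 1 else 0) else 0
      have h1 : ∀ i : Fin t, lift (c i) u = g i := by
        intro i
        by_cases h : (i : ℕ) < s
        · simp only [lift, c, g, dif_pos h]
          show ((if G.Adj _ u.1 then (1 : ZMod 2) else 0)).val = _
          split_ifs <;> rfl
        · simp [lift, c, g, dif_neg h]
      calc ∑ a ∈ X, (if G.Adj a u.1 then 1 else 0 : ℕ)
          = ∑ a : X, (if G.Adj (a : V) u.1 then 1 else 0 : ℕ) :=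
            (Finset.sum_coe_sort X _).symm
        _ = ∑ i : Fin s, (if G.Adj (e i : V) u.1 then 1 else 0 : ℕ) :=
            (Fintype.sum_equiv e _ _ fun i => rfl).symm
        _ = ∑ i : Fin s, g i := by
            refine Finset.sum_congr rfl fun i _ => ?_
            simp only [g, dif_pos i.2]
        _ = ∑ i ∈ Finset.range s, g i := Fin.sum_univ_eq_sum_range g s
        _ = ∑ i ∈ Finset.range t, g i := by
            refine Finset.sum_subset (Finset.range_subset_range.mpr hXt) fun i _ hi => ?_
            simp only [Finset.mem_range] at hi
            simp [g, hi]
        _ = ∑ i : Fin t, g i := (Fin.sum_univ_eq_sum_range g t).symm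
        _ = ∑ i, lift (c i) u := by
            exact Finset.sum_congr rfl fun i _ => (h1 i).symm
    refine ⟨c, ?_⟩
    have hex : ∃ X', good c X' := ⟨_, hgood⟩
    show Φ c = _
    simp only [Φ, dif_pos hex]
    refine Quotient.sound fun u hu => ?_
    rw [hmin, hmin, hex.choose_spec ⟨u, Finset.mem_compl.mpr hu⟩,
      hgood ⟨u, Finset.mem_compl.mpr hu⟩]
  haveI : Fintype ↥W := Fintype.ofFinite _
  calc Nat.card (Quotient (necSetoidLe G A t))
      ≤ Nat.card (Fin t → W) := Nat.card_le_card_of_surjective Φ hsurj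
    _ = Nat.card W ^ t := by
        rw [Nat.card_fun]; congr 1
        rw [Nat.card_eq_fintype_card, Fintype.card_fin]
    _ = (2 ^ M.rank) ^ t := by
        rw [Nat.card_eq_fintype_card, Module.card_eq_pow_finrank (K := ZMod 2),
          ZMod.card, M.rank_eq_finrank_span_row]
        rfl
    _ = 2 ^ (t * M.rank) := by rw [← pow_mul, mul_comm]
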